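/- Let {x^k} be generated by Algorithm 1, and suppose a subsequence {x^k}_{k ∈ K} converges to some point x*. Then liminf_{k→∞, k ∈ K} G(x^k) = 0. -/

import Mathlib

open scoped RealInnerProductSpace

/-- The Frank–Wolfe gap `G(x) = sup_{v ∈ s} (⟪∇f(x), x − v⟫ + g(x) − g(v))`. -/
noncomputable def FWgap {E : Type*} [NormedAddCommGroup E] [InnerProductSpace ℝ E] [CompleteSpace E]
    (f g : E → ℝ) (s : Set E) (x : E) : ℝ :=
  ⨆ v : s, (⟪gradient f x, x - (v : E)⟫ + g x - g (v : E))


set_option maxHeartbeats 2000000 in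
/-- If a subsequence `{x^k}_{k ∈ K}` of the iterates of Algorithm 1
converges to some point `x*`, then `liminf_{k→∞, k ∈ K} G(x^k) = 0`. -/
theorem alg1_liminf_FWgap_along_subsequence
    {E : Type*} [NormedAddCommGroup E] [InnerProductSpace ℝ E] [FiniteDimensional ℝ E]
    (s : Set E) (hs_ne : s.Nonempty) (hs_cl : IsClosed s) (hs_cv : Convex ℝ s)
    (g : E → ℝ) (hg_cv : ConvexOn ℝ s g) (hg_lsc : LowerSemicontinuousOn g s)
    (hg_sc : ∀ M : ℝ, ∃ R : ℝ, ∀ z ∈ s, R ≤ ‖z‖ → M ≤ g z / ‖z‖)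
    (f : E → ℝ) (hf : ∃ u : Set E, IsOpen u ∧ s ⊆ u ∧ ContDiffOn ℝ 1 f u)
    (hF_bdd : BddBelow ((fun z => f z + g z) '' s))
    (β σ p : ℝ) (hβ : β ∈ Set.Ioo (0 : ℝ) 1) (hσ : σ ∈ Set.Ioo (0 : ℝ) 1)
    (hp : p ∈ Set.Ioc (0 : ℝ) 1)
    (x v d : ℕ → E) (ik : ℕ → ℕ) (Fs ps : ℕ → ℝ)
    (hx0 : x 0 ∈ s)
    (hv : ∀ k, v k ∈ s ∧ ∀ w ∈ s,
      ⟪gradient f (x k), v k⟫ + g (v k) ≤ ⟪gradient f (x k), w⟫ + g w)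
    (hd : ∀ k, d k = v k - x k)
    (hik : ∀ k,
      (f (x k + β ^ ik k • d k) + g (x k + β ^ ik k • d k)
          ≤ Fs k - σ * β ^ ik k * FWgap f g s (x k))
      ∧ ∀ j < ik k,
        ¬ (f (x k + β ^ j • d k) + g (x k + β ^ j • d k)
          ≤ Fs k - σ * β ^ j * FWgap f g s (x k)))
    (hxsucc : ∀ k, x (k + 1) = x k + β ^ ik k • d k)
    (hF0 : Fs 0 = f (x 0) + g (x 0))
    (hps : ∀ k, ps (k + 1) ∈ Set.Icc p 1)
    (hFsucc : ∀ k, Fs (k + 1)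
      = ps (k + 1) * (f (x (k + 1)) + g (x (k + 1))) + (1 - ps (k + 1)) * Fs k)
    (φ : ℕ → ℕ) (hφ : StrictMono φ)
    (xstar : E)
    (hconv : Filter.Tendsto (fun k => x (φ k)) Filter.atTop (nhds xstar)) :
    Filter.liminf (fun k => FWgap f g s (x (φ k))) Filter.atTop = 0 := by
  classical
  obtain ⟨u, hu_open, hsu, hfC1⟩ := hf
  obtain ⟨hβ0, hβ1⟩ := hβ
  obtain ⟨hσ0, hσ1⟩ := hσ
  obtain ⟨hp0, hp1⟩ := hp
  haveI : Nonempty ↥s := hs_ne.to_subtype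
  -- basic gradient facts
  have hgradf : ∀ z y : E, ⟪gradient f z, y⟫ = fderiv ℝ f z y := by
    intro z y
    simp [gradient, InnerProductSpace.toDual_symm_apply]
  have hdiffat : ∀ z ∈ u, DifferentiableAt ℝ f z := fun z hz =>
    (hfC1.differentiableOn one_ne_zero).differentiableAt (hu_open.mem_nhds hz)
  -- all iterates lie in s
  have hxs : ∀ k, x k ∈ s := by
    intro k
    induction k with
    | zero => exact hx0
    | succ k ih =>
      rw [hxsucc k, hd k]
      have hco : x k + β ^ ik k • (v k - x k)
          = (1 - β ^ ik k) • x k + β ^ ik k • v k := by module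
      rw [hco]
      exact hs_cv ih (hv k).1 (by linarith [pow_le_one₀ hβ0.le hβ1.le (n := ik k)])
        (pow_nonneg hβ0.le _) (by ring)
  -- gap formula
  have hGeq : ∀ k, FWgap f g s (x k)
      = ⟪gradient f (x k), x k - v k⟫ + g (x k) - g (v k) := by
    intro k
    have hub : ∀ w : s, ⟪gradient f (x k), x k - (w : E)⟫ + g (x k) - g (w : E)
        ≤ ⟪gradient f (x k), x k - v k⟫ + g (x k) - g (v k) := by
      intro w
      have h := (hv k).2 w w.2
      simp only [inner_sub_right] at *
      linarith
    have hbdd : BddAbove (Set.range fun w : s =>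
        ⟪gradient f (x k), x k - (w : E)⟫ + g (x k) - g (w : E)) := by
      refine ⟨⟪gradient f (x k), x k - v k⟫ + g (x k) - g (v k), ?_⟩
      rintro a ⟨w, rfl⟩
      exact hub w
    refine le_antisymm (ciSup_le hub) ?_
    exact le_ciSup hbdd (⟨v k, (hv k).1⟩ : s)
  -- gap is nonnegative
  have hGnn : ∀ k, 0 ≤ FWgap f g s (x k) := by
    intro k
    rw [hGeq k]
    have h := (hv k).2 (x k) (hxs k)
    simp only [inner_sub_right] at *
    linarith
  have hσβG : ∀ k, 0 ≤ σ * β ^ ik k * FWgap f g s (x k) := fun k =>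
    mul_nonneg (mul_nonneg hσ0.le (pow_nonneg hβ0.le _)) (hGnn k)
  have hFle : ∀ k, f (x (k + 1)) + g (x (k + 1))
      ≤ Fs k - σ * β ^ ik k * FWgap f g s (x k) := by
    intro k
    rw [hxsucc k]
    exact (hik k).1
  -- F(x^k) ≤ Fs k
  have hFsk : ∀ k, f (x k) + g (x k) ≤ Fs k := by
    intro k
    induction k with
    | zero => rw [hF0]
    | succ k ih =>
      have h1 := hFle k
      have h2 := hσβG k
      obtain ⟨hpk1, hpk2⟩ := hps k
      rw [hFsucc k]
      nlinarith [mul_nonneg (sub_nonneg.2 hpk2)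
        (sub_nonneg.2 (le_trans h1 (by linarith)) : (0:ℝ) ≤ Fs k - (f (x (k+1)) + g (x (k+1))))]
  -- descent of Fs
  have hstep : ∀ k, Fs (k + 1) ≤ Fs k - p * (σ * β ^ ik k * FWgap f g s (x k)) := by
    intro k
    have h1 := hFle k
    have h2 := hσβG k
    obtain ⟨hpk1, hpk2⟩ := hps k
    rw [hFsucc k]
    nlinarith [mul_le_mul_of_nonneg_left h1 (le_trans hp0.le hpk1),
      mul_le_mul_of_nonneg_right hpk1 h2]
  have hanti : Antitone Fs := antitone_nat_of_succ_le fun k => by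
    have := hstep k
    have h2 := hσβG k
    nlinarith
  -- Fs bounded below and converges
  obtain ⟨m, hm⟩ := hF_bdd
  have hFslb : ∀ k, m ≤ Fs k := fun k =>
    le_trans (hm ⟨x k, hxs k, rfl⟩) (hFsk k)
  have hFsconv : Filter.Tendsto Fs Filter.atTop (nhds (⨅ k, Fs k)) :=
    tendsto_atTop_ciInf hanti ⟨m, by rintro a ⟨k, rfl⟩; exact hFslb k⟩
  have hdiff0 : Filter.Tendsto (fun k => Fs k - Fs (k + 1)) Filter.atTop (nhds 0) := by
    have h2 : Filter.Tendsto (fun k => Fs (k + 1)) Filter.atTop (nhds (⨅ k, Fs k)) :=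
      hFsconv.comp (Filter.tendsto_add_atTop_nat 1)
    simpa using hFsconv.sub h2
  -- β^{i_k} G_k → 0
  have hβG0 : Filter.Tendsto (fun k => β ^ ik k * FWgap f g s (x k)) Filter.atTop (nhds 0) := by
    have hpσ : 0 < p * σ := mul_pos hp0 hσ0
    have hle : ∀ k, β ^ ik k * FWgap f g s (x k) ≤ (Fs k - Fs (k + 1)) / (p * σ) := by
      intro k
      rw [le_div_iff₀ hpσ]
      nlinarith [hstep k]
    have hg0 : Filter.Tendsto (fun k => (Fs k - Fs (k + 1)) / (p * σ)) Filter.atTop (nhds 0) := by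
      simpa using hdiff0.div_const (p * σ)
    exact squeeze_zero (fun k => mul_nonneg (pow_nonneg hβ0.le _) (hGnn k)) hle hg0
  have hsub : Filter.Tendsto (fun k => β ^ ik (φ k) * FWgap f g s (x (φ k)))
      Filter.atTop (nhds 0) := hβG0.comp hφ.tendsto_atTop
  -- x* ∈ s and gradient continuity
  have hxstar_s : xstar ∈ s :=
    hs_cl.mem_of_tendsto hconv (Filter.Eventually.of_forall fun k => hxs (φ k))
  have hxstar_u : xstar ∈ u := hsu hxstar_s
  have hfd_cont : ContinuousOn (fderiv ℝ f) u :=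
    hfC1.continuousOn_fderiv_of_isOpen hu_open le_rfl
  have hfd_at : ContinuousAt (fderiv ℝ f) xstar :=
    hfd_cont.continuousAt (hu_open.mem_nhds hxstar_u)
  have hgrad_tendsto : Filter.Tendsto (fun k => gradient f (x (φ k))) Filter.atTop
      (nhds (gradient f xstar)) := by
    have hc : ContinuousAt (fun z => gradient f z) xstar :=
      ((InnerProductSpace.toDual ℝ E).symm.continuous.continuousAt).comp hfd_at
    exact hc.tendsto.comp hconv
  -- eventual bound on gradient norms
  set N : ℝ := ‖gradient f xstar‖ + 1 with hN
  have hNev : ∀ᶠ k in Filter.atTop, ‖gradient f (x (φ k))‖ ≤ N := by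
    have := (hgrad_tendsto.norm).eventually (gt_mem_nhds (by simp [hN] : ‖gradient f xstar‖ < N))
    exact this.mono fun k hk => le_of_lt hk
  -- bound on v along the subsequence
  obtain ⟨R, hR⟩ := hg_sc (N + 1)
  obtain ⟨w0, hw0⟩ := hs_ne
  set C : ℝ := N * ‖w0‖ + g w0 with hC
  set Bv : ℝ := max R (max 0 C) with hBv
  have hvbound : ∀ j, ‖gradient f (x j)‖ ≤ N → ‖v j‖ ≤ Bv := by
    intro j hNj
    by_contra hcon
    push_neg at hcon
    have hRv : R ≤ ‖v j‖ := le_trans (le_max_left _ _) hcon.le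
    have hgv : N + 1 ≤ g (v j) / ‖v j‖ := hR (v j) (hv j).1 hRv
    have hvpos : (0:ℝ) < ‖v j‖ := lt_of_le_of_lt (le_trans (le_max_left 0 C) (le_max_right R _)) hcon
    have hgv' : (N + 1) * ‖v j‖ ≤ g (v j) := by
      exact (le_div_iff₀ hvpos).1 hgv
    have hopt := (hv j).2 w0 hw0
    have hi1 : |⟪gradient f (x j), v j⟫| ≤ ‖gradient f (x j)‖ * ‖v j‖ :=
      abs_real_inner_le_norm _ _
    have hi2 : |⟪gradient f (x j), w0⟫| ≤ ‖gradient f (x j)‖ * ‖w0‖ :=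
      abs_real_inner_le_norm _ _
    have hCle : C ≤ Bv := le_trans (le_max_right 0 C) (le_max_right R _)
    have hn0 : (0:ℝ) ≤ ‖w0‖ := norm_nonneg _
    have h1 : -(N * ‖v j‖) ≤ ⟪gradient f (x j), v j⟫ := by
      nlinarith [neg_abs_le ⟪gradient f (x j), v j⟫, norm_nonneg (v j)]
    have h2 : ⟪gradient f (x j), w0⟫ ≤ N * ‖w0‖ := by
      nlinarith [le_abs_self ⟪gradient f (x j), w0⟫]
    nlinarith
  have hNorm : Filter.Tendsto (fun k => ‖x (φ k)‖) Filter.atTop (nhds ‖xstar‖) := hconv.norm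
  set D : ℝ := Bv + ‖xstar‖ + 1 with hD
  have hD0 : (0:ℝ) < D := by
    have : (0:ℝ) ≤ Bv := le_trans (le_max_left 0 C) (le_max_right R _)
    have := norm_nonneg xstar
    linarith
  have hdev : ∀ᶠ k in Filter.atTop, ‖d (φ k)‖ ≤ D := by
    have hxev : ∀ᶠ k in Filter.atTop, ‖x (φ k)‖ ≤ ‖xstar‖ + 1 := by
      have := hNorm.eventually (gt_mem_nhds (by linarith : ‖xstar‖ < ‖xstar‖ + 1))
      exact this.mono fun k hk => le_of_lt hk
    filter_upwards [hNev, hxev] with k h1 h2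
    rw [hd]
    calc ‖v (φ k) - x (φ k)‖ ≤ ‖v (φ k)‖ + ‖x (φ k)‖ := norm_sub_le _ _
      _ ≤ Bv + (‖xstar‖ + 1) := add_le_add (hvbound _ h1) h2
      _ = D := by rw [hD]; ring
  -- key claim: the gap is frequently small along the subsequence
  have hfreq : ∀ ε > (0:ℝ), ∃ᶠ k in Filter.atTop, FWgap f g s (x (φ k)) < ε := by
    intro ε hε
    by_contra hcon
    rw [Filter.not_frequently] at hcon
    have hev : ∀ᶠ k in Filter.atTop, ε ≤ FWgap f g s (x (φ k)) := by
      filter_upwards [hcon] with k hk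
      exact not_lt.1 hk
    -- β^{i_{φ k}} → 0
    have hβik0 : Filter.Tendsto (fun k => β ^ ik (φ k)) Filter.atTop (nhds 0) := by
      refine squeeze_zero' (Filter.Eventually.of_forall fun k => pow_nonneg hβ0.le _)
        (hev.mono fun k hk => ?_) (by simpa using hsub.div_const ε)
      rw [le_div_iff₀ hε]
      exact mul_le_mul_of_nonneg_left hk (pow_nonneg hβ0.le _)
    have hik1 : ∀ᶠ k in Filter.atTop, 1 ≤ ik (φ k) := by
      have := hβik0.eventually (gt_mem_nhds (by norm_num : (0:ℝ) < 1))
      filter_upwards [this] with k hk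
      by_contra h
      push_neg at h
      interval_cases h' : ik (φ k)
      simp [h'] at hk
    -- step sizes to 0
    have ht0 : Filter.Tendsto (fun k => β ^ (ik (φ k) - 1)) Filter.atTop (nhds 0) := by
      have h := hβik0.div_const β
      rw [zero_div] at h
      refine h.congr' ?_
      filter_upwards [hik1] with k hk
      have : ik (φ k) = (ik (φ k) - 1) + 1 := by omega
      rw [this, pow_succ]
      field_simp
      simp
    -- setup for smoothness estimate
    set δ : ℝ := (1 - σ) * ε / (2 * (D + 1)) with hδ
    have hδ0 : 0 < δ := by
      apply div_pos (mul_pos (by linarith) hε) (by linarith)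
    obtain ⟨r, hrpos, hru⟩ := Metric.isOpen_iff.1 hu_open xstar hxstar_u
    rw [Metric.continuousAt_iff] at hfd_at
    obtain ⟨ρ0, hρ0pos, hρ0⟩ := hfd_at (δ / 2) (by linarith)
    set ρ : ℝ := min ρ0 r with hρ
    have hρpos : 0 < ρ := lt_min hρ0pos hrpos
    -- collect eventualities
    have E3 : ∀ᶠ k in Filter.atTop, ‖x (φ k) - xstar‖ < ρ / 2 := by
      have := hconv.eventually (Metric.ball_mem_nhds xstar (by linarith : (0:ℝ) < ρ / 2))
      filter_upwards [this] with k hk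
      rw [← dist_eq_norm]
      exact hk
    have E5 : ∀ᶠ k in Filter.atTop, β ^ (ik (φ k) - 1) * D < ρ / 2 := by
      have h := ht0.mul_const D
      rw [zero_mul] at h
      exact h.eventually (gt_mem_nhds (by linarith : (0:ℝ) < ρ / 2))
    have hFalse : ∀ᶠ k in (Filter.atTop : Filter ℕ), False := by
      filter_upwards [hev, hik1, E3, hdev, E5] with k h1 h2 h3 h4 h5
      set j := φ k with hj
      set t : ℝ := β ^ (ik j - 1) with htdef
      have ht_pos : 0 < t := pow_pos hβ0 _
      have ht_le1 : t ≤ 1 := pow_le_one₀ hβ0.le hβ1.le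
      -- line search failure at exponent ik j - 1
      have hfail := (hik j).2 (ik j - 1) (by omega)
      push_neg at hfail
      -- convexity of g along the segment
      have hpt : x j + t • d j = (1 - t) • x j + t • v j := by rw [hd]; module
      have hgc : g (x j + t • d j) ≤ (1 - t) * g (x j) + t * g (v j) := by
        rw [hpt]
        exact hg_cv.2 (hxs j) ((hv j).1) (by linarith) ht_pos.le (by ring)
      -- gap formula in terms of d
      have hGd : FWgap f g s (x j)
          = -⟪gradient f (x j), d j⟫ + g (x j) - g (v j) := by
        rw [hGeq j, hd, ← neg_sub (v j) (x j), inner_neg_right]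
      -- segment is inside the good ball
      have hseg : ∀ z ∈ segment ℝ (x j) (x j + t • d j), ‖z - xstar‖ < ρ := by
        intro z hz
        obtain ⟨a, b, ha, hb, hab, rfl⟩ := hz
        have ha' : a = 1 - b := by linarith
        subst ha'
        have hzx : (1 - b) • x j + b • (x j + t • d j) - x j = b • (t • d j) := by
          module
        have hnd : ‖t • d j‖ = t * ‖d j‖ := by
          rw [norm_smul, Real.norm_eq_abs, abs_of_pos ht_pos]
        have h6 : ‖(1 - b) • x j + b • (x j + t • d j) - x j‖ ≤ t * ‖d j‖ := by
          rw [hzx, norm_smul, Real.norm_eq_abs, abs_of_nonneg hb, hnd]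
          nlinarith [norm_nonneg (d j), mul_nonneg ht_pos.le (norm_nonneg (d j))]
        have h7 : t * ‖d j‖ ≤ t * D := mul_le_mul_of_nonneg_left h4 ht_pos.le
        calc ‖(1 - b) • x j + b • (x j + t • d j) - xstar‖
            ≤ ‖(1 - b) • x j + b • (x j + t • d j) - x j‖ + ‖x j - xstar‖ :=
              norm_sub_le_norm_sub_add_norm_sub _ _ _
          _ < ρ / 2 + ρ / 2 := by
              have := lt_of_le_of_lt (h6.trans h7) h5
              linarith
          _ = ρ := by ring
      have hseg_u : ∀ z ∈ segment ℝ (x j) (x j + t • d j), z ∈ u := by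
        intro z hz
        apply hru
        rw [Metric.mem_ball, dist_eq_norm]
        exact lt_of_lt_of_le (hseg z hz) (min_le_right _ _)
      -- derivative bound on the segment
      have hfd_close : ∀ z ∈ segment ℝ (x j) (x j + t • d j),
          ‖fderiv ℝ f z - fderiv ℝ f (x j)‖ ≤ δ := by
        intro z hz
        have hz1 : dist z xstar < ρ0 := by
          rw [dist_eq_norm]
          exact lt_of_lt_of_le (hseg z hz) (min_le_left _ _)
        have hx1 : dist (x j) xstar < ρ0 := by
          rw [dist_eq_norm]
          calc ‖x j - xstar‖ < ρ / 2 := h3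
            _ ≤ ρ0 := by
              have hh := min_le_left ρ0 r
              rw [← hρ] at hh
              linarith
        have hb1 := hρ0 hz1
        have hb2 := hρ0 hx1
        calc ‖fderiv ℝ f z - fderiv ℝ f (x j)‖
            ≤ dist (fderiv ℝ f z) (fderiv ℝ f xstar)
              + dist (fderiv ℝ f (x j)) (fderiv ℝ f xstar) := by
              rw [dist_eq_norm, dist_eq_norm]
              have := norm_sub_le_norm_sub_add_norm_sub (fderiv ℝ f z) (fderiv ℝ f xstar) (fderiv ℝ f (x j))
              calc ‖fderiv ℝ f z - fderiv ℝ f (x j)‖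
                  ≤ ‖fderiv ℝ f z - fderiv ℝ f xstar‖ + ‖fderiv ℝ f xstar - fderiv ℝ f (x j)‖ :=
                    norm_sub_le_norm_sub_add_norm_sub _ _ _
                _ = ‖fderiv ℝ f z - fderiv ℝ f xstar‖ + ‖fderiv ℝ f (x j) - fderiv ℝ f xstar‖ := by
                    rw [norm_sub_rev (fderiv ℝ f xstar)]
          _ ≤ δ / 2 + δ / 2 := add_le_add hb1.le hb2.le
          _ = δ := by ring
      -- mean value estimate
      have hmv : ‖(f (x j + t • d j) - fderiv ℝ f (x j) (x j + t • d j))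
            - (f (x j) - fderiv ℝ f (x j) (x j))‖ ≤ δ * ‖(x j + t • d j) - x j‖ := by
        apply Convex.norm_image_sub_le_of_norm_hasFDerivWithin_le
          (f := fun z => f z - fderiv ℝ f (x j) z)
          (f' := fun z => fderiv ℝ f z - fderiv ℝ f (x j))
          (fun z hz => (((hdiffat z (hseg_u z hz)).hasFDerivAt).sub
            ((fderiv ℝ f (x j)).hasFDerivAt)).hasFDerivWithinAt)
          hfd_close (convex_segment _ _)
          (left_mem_segment ℝ _ _) (right_mem_segment ℝ _ _)
      have hsimp : (x j + t • d j) - x j = t • d j := by abel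
      have hmap : fderiv ℝ f (x j) (x j + t • d j) - fderiv ℝ f (x j) (x j)
          = t * ⟪gradient f (x j), d j⟫ := by
        rw [← map_sub, hsimp, map_smul, hgradf]
        simp
      have hnd : ‖t • d j‖ = t * ‖d j‖ := by
        rw [norm_smul, Real.norm_eq_abs, abs_of_pos ht_pos]
      have hmv' : |f (x j + t • d j) - f (x j) - t * ⟪gradient f (x j), d j⟫|
          ≤ δ * (t * ‖d j‖) := by
        have := hmv
        rw [hsimp, hnd] at this
        rw [show f (x j + t • d j) - f (x j) - t * ⟪gradient f (x j), d j⟫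
          = (f (x j + t • d j) - fderiv ℝ f (x j) (x j + t • d j))
            - (f (x j) - fderiv ℝ f (x j) (x j)) by rw [← hmap]; ring]
        exact this
      -- assemble the contradiction
      have hFs_ge : f (x j) + g (x j) ≤ Fs j := hFsk j
      have hfail' : Fs j - σ * t * FWgap f g s (x j)
          < f (x j + t • d j) + g (x j + t • d j) := hfail
      have hGε : ε ≤ FWgap f g s (x j) := h1
      set Gk := FWgap f g s (x j) with hGk
      have hkey : (1 - σ) * t * Gk < f (x j + t • d j) - f (x j) - t * ⟪gradient f (x j), d j⟫ := by
        have hgxv : g (x j) - g (v j) = Gk + ⟪gradient f (x j), d j⟫ := by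
          rw [hGd]; ring
        nlinarith [hfail', hgc, hFs_ge, hgxv]
      have habs : f (x j + t • d j) - f (x j) - t * ⟪gradient f (x j), d j⟫ ≤ δ * (t * D) := by
        have h8 : δ * (t * ‖d j‖) ≤ δ * (t * D) := by
          apply mul_le_mul_of_nonneg_left _ hδ0.le
          exact mul_le_mul_of_nonneg_left h4 ht_pos.le
        exact le_trans (le_abs_self _) (le_trans hmv' h8)
      have hδeq : δ * (2 * (D + 1)) = (1 - σ) * ε := by
        rw [hδ]
        field_simp
      nlinarith [mul_pos ht_pos hε, mul_pos (mul_pos (by linarith : (0:ℝ) < 1 - σ) ht_pos) hε,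
        mul_le_mul_of_nonneg_left hGε (mul_pos (by linarith : (0:ℝ) < 1 - σ) ht_pos).le]
    obtain ⟨k, hk⟩ := hFalse.exists
    exact hk
  -- conclude: liminf = 0
  rw [Filter.liminf_eq]
  have h0T : (0:ℝ) ∈ {a | ∀ᶠ n in Filter.atTop, a ≤ FWgap f g s (x (φ n))} :=
    Filter.Eventually.of_forall fun k => hGnn (φ k)
  have hub : ∀ a ∈ {a | ∀ᶠ n in Filter.atTop, a ≤ FWgap f g s (x (φ n))}, a ≤ 0 := by
    intro a ha
    by_contra h
    push_neg at h
    obtain ⟨k, hk1, hk2⟩ := ((hfreq a h).and_eventually ha).exists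
    exact absurd (hk2.trans_lt hk1) (lt_irrefl a)
  exact le_antisymm (csSup_le ⟨0, h0T⟩ hub) (le_csSup ⟨0, hub⟩ h0T)
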